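/- For weighted graphs, the homomorphism count into the looped complete graph with loop weight ℓ satisfies hom(G, K_k^ℓ) = Σ_{f : V(G) → [k]} ℓ^{#{uv ∈ E(G) : f(u) = f(v)}}, and this equals the Potts-model partition-function specialization k^{c(G)} (ℓ−1)^{r(G)} T(G; (ℓ−1+k)/(ℓ−1), ℓ) of the Tutte polynomial, where c(G) is the number of connected components, r(G) = |V(G)| − c(G) is the rank, and T is the Tutte polynomial (assuming ℓ ≠ 1). -/

import Mathlib

open scoped Classical

/-- The rank of an edge subset `A`: `|V| − c(V, A)`, where `c(V, A)` is the number of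
connected components of the spanning subgraph with edge set `A`. -/
noncomputable def edgeRank (V : Type*) [Fintype V] (A : Finset (Sym2 V)) : ℕ :=
  Fintype.card V - Nat.card (SimpleGraph.fromEdgeSet (↑A : Set (Sym2 V))).ConnectedComponent

/-- The Tutte polynomial `T(G;x,y) = Σ_{A ⊆ E} (x−1)^{r(E)−r(A)} (y−1)^{|A|−r(A)}`. -/
noncomputable def tutte {V : Type*} [Fintype V] [DecidableEq V]
    (G : SimpleGraph V) [DecidableRel G.Adj] (x y : ℝ) : ℝ :=
  ∑ A ∈ G.edgeFinset.powerset,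
    (x - 1) ^ (edgeRank V G.edgeFinset - edgeRank V A) *
      (y - 1) ^ (A.card - edgeRank V A)

section Aux

open SimpleGraph Finset

set_option linter.unusedSectionVars false

variable {V : Type*} [Fintype V] [DecidableEq V]

lemma mono_of_walk {k : ℕ} (A : Finset (Sym2 V)) (f : V → Fin k)
    (hf : ∀ e ∈ A, (Sym2.map f e).IsDiag) {u v : V}
    (p : (SimpleGraph.fromEdgeSet (↑A : Set (Sym2 V))).Walk u v) : f u = f v := by
  induction p with
  | nil => rfl
  | @cons u w v h q ih =>
    rw [fromEdgeSet_adj] at h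
    have h2 := hf _ (by exact_mod_cast h.1)
    rw [Sym2.map_pair_eq, Sym2.isDiag_iff_proj_eq] at h2
    exact h2.trans ih

lemma count_mono (k : ℕ) (A : Finset (Sym2 V)) :
    (Finset.univ.filter (fun f : V → Fin k => ∀ e ∈ A, (Sym2.map f e).IsDiag)).card
      = k ^ Nat.card (SimpleGraph.fromEdgeSet (↑A : Set (Sym2 V))).ConnectedComponent := by
  set H := SimpleGraph.fromEdgeSet (↑A : Set (Sym2 V)) with hH
  have E : {f : V → Fin k // ∀ e ∈ A, (Sym2.map f e).IsDiag} ≃ (H.ConnectedComponent → Fin k) :=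
    { toFun := fun f => SimpleGraph.ConnectedComponent.lift f.1
        (fun u v p _ => mono_of_walk A f.1 f.2 p)
      invFun := fun g => ⟨fun v => g (H.connectedComponentMk v), by
        intro e he
        induction e with
        | _ x y =>
          rw [Sym2.map_pair_eq, Sym2.isDiag_iff_proj_eq]
          by_cases hxy : x = y
          · rw [hxy]
          · have : H.Adj x y := by rw [hH, fromEdgeSet_adj]; exact ⟨by exact_mod_cast he, hxy⟩
            rw [SimpleGraph.ConnectedComponent.connectedComponentMk_eq_of_adj this]⟩
      left_inv := fun f => by ext v; simp
      right_inv := fun g => by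
        ext c
        induction c using SimpleGraph.ConnectedComponent.ind with
        | _ v => simp }
  have : Fintype H.ConnectedComponent := Fintype.ofFinite _
  rw [← Fintype.card_subtype, Fintype.card_congr E, Fintype.card_fun, Fintype.card_fin,
    Nat.card_eq_fintype_card]

lemma compCard_le_card (A : Finset (Sym2 V)) :
    Nat.card (SimpleGraph.fromEdgeSet (↑A : Set (Sym2 V))).ConnectedComponent
      ≤ Fintype.card V := by
  rw [← Nat.card_eq_fintype_card]
  exact Nat.card_le_card_of_surjective _
    (fun c => c.ind fun v => ⟨v, rfl⟩)

lemma compCard_mono {A B : Finset (Sym2 V)} (h : A ⊆ B) :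
    Nat.card (SimpleGraph.fromEdgeSet (↑B : Set (Sym2 V))).ConnectedComponent
      ≤ Nat.card (SimpleGraph.fromEdgeSet (↑A : Set (Sym2 V))).ConnectedComponent := by
  have hle : SimpleGraph.fromEdgeSet (↑A : Set (Sym2 V)) ≤ fromEdgeSet ↑B :=
    fromEdgeSet_mono (by exact_mod_cast h)
  refine Nat.card_le_card_of_surjective
    (SimpleGraph.ConnectedComponent.map (Hom.ofLE hle)) ?_
  intro c
  refine c.ind fun v => ⟨(fromEdgeSet ↑A).connectedComponentMk v, ?_⟩
  simp [ConnectedComponent.map_mk]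

lemma reach_insert {a b : V} {s : Finset (Sym2 V)} {u v : V}
    (p : (SimpleGraph.fromEdgeSet (↑(insert s(a,b) s) : Set (Sym2 V))).Walk u v) :
    (SimpleGraph.fromEdgeSet (↑s : Set (Sym2 V))).Reachable u v ∨
    ((SimpleGraph.fromEdgeSet (↑s : Set (Sym2 V))).Reachable u a ∧
      (SimpleGraph.fromEdgeSet (↑s : Set (Sym2 V))).Reachable b v) ∨
    ((SimpleGraph.fromEdgeSet (↑s : Set (Sym2 V))).Reachable u b ∧
      (SimpleGraph.fromEdgeSet (↑s : Set (Sym2 V))).Reachable a v) := by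
  induction p with
  | nil => exact Or.inl (Reachable.refl _)
  | @cons u w v h q ih =>
    rw [fromEdgeSet_adj] at h
    obtain ⟨hmem, hne⟩ := h
    rw [Finset.coe_insert, Set.mem_insert_iff] at hmem
    rcases hmem with heq | hmem
    · rw [Sym2.eq_iff] at heq
      rcases heq with ⟨rfl, rfl⟩ | ⟨rfl, rfl⟩
      · rcases ih with h1 | ⟨h2, h3⟩ | ⟨h2, h3⟩
        · exact Or.inr (Or.inl ⟨Reachable.refl _, h1⟩)
        · exact Or.inr (Or.inl ⟨Reachable.refl _, h3⟩)
        · exact Or.inl h3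
      · rcases ih with h1 | ⟨h2, h3⟩ | ⟨h2, h3⟩
        · exact Or.inr (Or.inr ⟨Reachable.refl _, h1⟩)
        · exact Or.inl h3
        · exact Or.inr (Or.inr ⟨Reachable.refl _, h3⟩)
    · have hadj : (SimpleGraph.fromEdgeSet (↑s : Set (Sym2 V))).Adj u w := by
        rw [fromEdgeSet_adj]; exact ⟨hmem, hne⟩
      rcases ih with h1 | ⟨h2, h3⟩ | ⟨h2, h3⟩
      · exact Or.inl (hadj.reachable.trans h1)
      · exact Or.inr (Or.inl ⟨hadj.reachable.trans h2, h3⟩)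
      · exact Or.inr (Or.inr ⟨hadj.reachable.trans h2, h3⟩)

lemma compCard_insert (e : Sym2 V) (s : Finset (Sym2 V)) :
    Nat.card (SimpleGraph.fromEdgeSet (↑s : Set (Sym2 V))).ConnectedComponent ≤
      Nat.card (SimpleGraph.fromEdgeSet
        (↑(insert e s) : Set (Sym2 V))).ConnectedComponent + 1 := by
  induction e with
  | _ a b =>
    set Hs := SimpleGraph.fromEdgeSet (↑s : Set (Sym2 V)) with hHs
    set Ht := SimpleGraph.fromEdgeSet (↑(insert s(a,b) s) : Set (Sym2 V)) with hHt
    have hle : Hs ≤ Ht := fromEdgeSet_mono (by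
      rw [Finset.coe_insert]; exact Set.subset_insert _ _)
    have hinj : Function.Injective (fun c : Hs.ConnectedComponent =>
        if c = Hs.connectedComponentMk b then (Sum.inr () : Ht.ConnectedComponent ⊕ Unit)
        else Sum.inl (c.map (Hom.ofLE hle))) := by
      intro c1 c2 hc
      beta_reduce at hc
      by_cases h1 : c1 = Hs.connectedComponentMk b <;>
        by_cases h2 : c2 = Hs.connectedComponentMk b
      · rw [h1, h2]
      · rw [if_pos h1, if_neg h2] at hc; simp at hc
      · rw [if_neg h1, if_pos h2] at hc; simp at hc
      · rw [if_neg h1, if_neg h2] at hc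
        rw [Sum.inl.injEq] at hc
        obtain ⟨u, rfl⟩ := c1.exists_rep
        obtain ⟨v, rfl⟩ := c2.exists_rep
        have hr : Ht.Reachable u v := SimpleGraph.ConnectedComponent.exact hc
        obtain ⟨p⟩ := hr
        rcases reach_insert p with hh | ⟨ha, hb⟩ | ⟨ha, hb⟩
        · exact SimpleGraph.ConnectedComponent.sound hh
        · exact absurd (SimpleGraph.ConnectedComponent.sound hb.symm) h2
        · exact absurd (SimpleGraph.ConnectedComponent.sound ha) h1
    calc Nat.card Hs.ConnectedComponent
        ≤ Nat.card (Ht.ConnectedComponent ⊕ Unit) :=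
          Nat.card_le_card_of_injective _ hinj
      _ = Nat.card Ht.ConnectedComponent + 1 := by
          rw [Nat.card_sum]; simp

lemma card_V_le (A : Finset (Sym2 V)) :
    Fintype.card V ≤ A.card +
      Nat.card (SimpleGraph.fromEdgeSet (↑A : Set (Sym2 V))).ConnectedComponent := by
  induction A using Finset.induction_on with
  | empty =>
    simp only [Finset.card_empty, Finset.coe_empty, fromEdgeSet_empty, zero_add]
    have : Nat.card (⊥ : SimpleGraph V).ConnectedComponent = Fintype.card V := by
      rw [← Nat.card_eq_fintype_card]
      refine (Nat.card_eq_of_bijective (fun v => (⊥ : SimpleGraph V).connectedComponentMk v)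
        ⟨?_, fun c => c.ind fun v => ⟨v, rfl⟩⟩).symm
      intro u v h
      exact reachable_bot.mp (SimpleGraph.ConnectedComponent.exact h)
    omega
  | @insert e s he ih =>
    have h1 := compCard_insert (V := V) e s
    rw [Finset.card_insert_of_notMem he]
    omega

end Aux

/-- The weighted homomorphism count into `K_k^ℓ` (complete graph with a loop of weight
`ℓ` at each vertex), `Σ_f ℓ^{#monochromatic edges}`, equals the Potts partition-function
specialization `k^{c(G)} (ℓ−1)^{r(G)} T(G; (ℓ−1+k)/(ℓ−1), ℓ)` of the Tutte polynomial. -/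
theorem hom_weighted_loops_eq_tutte {V : Type*} [Fintype V] [DecidableEq V]
    (G : SimpleGraph V) [DecidableRel G.Adj] (k : ℕ) (ℓ : ℝ) (hℓ : ℓ ≠ 1) :
    (∑ f : V → Fin k,
        ℓ ^ (G.edgeFinset.filter (fun e => (Sym2.map f e).IsDiag)).card) =
      (k : ℝ) ^ Nat.card G.ConnectedComponent *
        (ℓ - 1) ^ (Fintype.card V - Nat.card G.ConnectedComponent) *
          tutte G ((ℓ - 1 + k) / (ℓ - 1)) ℓ := by
  classical
  have hℓ0 : ℓ - 1 ≠ 0 := sub_ne_zero.mpr hℓ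
  have hGE : SimpleGraph.fromEdgeSet (↑G.edgeFinset : Set (Sym2 V)) = G := by
    rw [SimpleGraph.coe_edgeFinset, SimpleGraph.fromEdgeSet_edgeSet]
  set n := Fintype.card V with hn
  set cE := Nat.card G.ConnectedComponent with hcE
  -- Step 1 : LHS = Σ_{A ⊆ E} (ℓ-1)^|A| k^{c(A)}
  have lhs_eq : (∑ f : V → Fin k,
        ℓ ^ (G.edgeFinset.filter (fun e => (Sym2.map f e).IsDiag)).card)
      = ∑ A ∈ G.edgeFinset.powerset, (ℓ - 1) ^ A.card *
          (k : ℝ) ^ Nat.card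
            (SimpleGraph.fromEdgeSet (↑A : Set (Sym2 V))).ConnectedComponent := by
    have step1 : ∀ f : V → Fin k,
        ℓ ^ (G.edgeFinset.filter (fun e => (Sym2.map f e).IsDiag)).card
          = ∏ e ∈ G.edgeFinset,
              ((if (Sym2.map f e).IsDiag then (ℓ - 1) else 0) + 1) := by
      intro f
      have : ∀ e : Sym2 V,
          ((if (Sym2.map f e).IsDiag then (ℓ - 1) else 0) + 1)
            = (if (Sym2.map f e).IsDiag then ℓ else 1) := by
        intro e; split <;> ring
      simp_rw [this]
      rw [Finset.prod_ite, Finset.prod_const, Finset.prod_const_one, mul_one]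
    simp_rw [step1, Finset.prod_add]
    rw [Finset.sum_comm]
    refine Finset.sum_congr rfl fun A hA => ?_
    have : ∀ f : V → Fin k,
        (∏ e ∈ A, (if (Sym2.map f e).IsDiag then (ℓ - 1) else 0)) *
            ∏ e ∈ G.edgeFinset \ A, (1 : ℝ)
          = (ℓ - 1) ^ A.card *
              (if ∀ e ∈ A, (Sym2.map f e).IsDiag then (1 : ℝ) else 0) := by
      intro f
      rw [Finset.prod_const_one, mul_one]
      have : ∀ e : Sym2 V, (if (Sym2.map f e).IsDiag then (ℓ - 1) else 0)
          = (ℓ - 1) * (if (Sym2.map f e).IsDiag then (1:ℝ) else 0) := by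
        intro e; split <;> ring
      simp_rw [this]
      rw [Finset.prod_mul_distrib, Finset.prod_const, Finset.prod_boole]
      congr!
    simp_rw [this]
    rw [← Finset.mul_sum, Finset.sum_boole, count_mono k A]
    push_cast
    ring
  rw [lhs_eq, tutte, Finset.mul_sum]
  refine Finset.sum_congr rfl fun A hA => ?_
  rw [Finset.mem_powerset] at hA
  set cA := Nat.card
    (SimpleGraph.fromEdgeSet (↑A : Set (Sym2 V))).ConnectedComponent with hcA
  have hcEe : Nat.card
      (SimpleGraph.fromEdgeSet (↑G.edgeFinset : Set (Sym2 V))).ConnectedComponent = cE := by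
    rw [hGE]
  have h1 : cA ≤ n := compCard_le_card A
  have h2 : cE ≤ cA := by rw [← hcEe]; exact compCard_mono hA
  have h3 : n ≤ A.card + cA := card_V_le A
  rw [edgeRank, edgeRank, hcEe, ← hcA, ← hn]
  have hx : (ℓ - 1 + (k:ℝ)) / (ℓ - 1) - 1 = (k:ℝ) / (ℓ - 1) := by
    field_simp
    ring
  rw [hx]
  have hre : n - cE - (n - cA) = cA - cE := by omega
  have hra : A.card - (n - cA) = A.card + cA - n := by omega
  rw [hre, hra, div_pow, div_mul_eq_mul_div, ← mul_div_assoc,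
    eq_div_iff (pow_ne_zero _ hℓ0)]
  have e1 : (k:ℝ)^cE * (k:ℝ)^(cA - cE) = (k:ℝ)^cA := by
    rw [← pow_add]; congr 1; omega
  have e2 : (ℓ-1)^(n - cE) * (ℓ-1)^(A.card + cA - n) = (ℓ-1)^(A.card) * (ℓ-1)^(cA - cE) := by
    rw [← pow_add, ← pow_add]; congr 1; omega
  linear_combination (-((ℓ-1)^(n - cE) * (ℓ-1)^(A.card + cA - n))) * e1 - (k:ℝ)^cA * e2
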